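/- Let p be an odd prime and k an integer with 1 ≤ k < p, and let b = 3p + k. Then T(b) = Σ_{i=0}^{⌊b/2⌋}(−1)^i (b−2i)^{b−3} binom(b,i) satisfies T(b) ≡ −2·Σ_{j=0}^{k}(−1)^j (k−2j)^k binom(k,j) (mod p); in particular T(3p+k) is not divisible by p. -/

import Mathlib

open Finset fwdDiff

lemma fwdDiff_pow_expand {R : Type*} [CommRing R] (h : R) (m : ℕ) :
    Δ_[h] (fun y : R => y ^ m) =
      fun y : R => ∑ i ∈ range m, ((m.choose i : R) * h ^ (m - i)) * y ^ i := by
  funext y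
  show (y + h) ^ m - y ^ m = _
  rw [add_pow, Finset.sum_range_succ]
  simp only [Nat.sub_self, pow_zero, mul_one, Nat.choose_self, Nat.cast_one, add_sub_cancel_right]
  exact Finset.sum_congr rfl fun i _ => by ring

lemma fwdDiff_iter_pow {R : Type*} [CommRing R] (h : R) :
    ∀ n m, m ≤ n → ∀ x : R, (Δ_[h])^[n] (fun y : R => y ^ m) x =
      if m = n then (n.factorial : R) * h ^ n else 0 := by
  intro n
  induction n with
  | zero =>
    intro m hm x
    interval_cases m
    simp
  | succ n ih =>
    intro m hm x
    rw [Function.iterate_succ_apply, fwdDiff_pow_expand]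
    have h1 : (fun y : R => ∑ i ∈ range m, ((m.choose i : R) * h ^ (m - i)) * y ^ i)
        = ∑ i ∈ range m, ((m.choose i : R) * h ^ (m - i)) • (fun y : R => y ^ i) := by
      funext y
      rw [Finset.sum_apply]
      rfl
    rw [h1, fwdDiff_iter_finset_sum, Finset.sum_apply]
    have h2 : ∀ i ∈ range m, (Δ_[h])^[n] (((m.choose i : R) * h ^ (m - i)) • fun y : R => y ^ i) x
        = ((m.choose i : R) * h ^ (m - i)) * (if i = n then (n.factorial : R) * h ^ n else 0) := by
      intro i hi
      rw [fwdDiff_iter_const_smul, Pi.smul_apply, smul_eq_mul,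
        ih i (by simp only [Finset.mem_range] at hi; omega) x]
    rw [Finset.sum_congr rfl h2]
    simp only [mul_ite, mul_zero]
    rw [Finset.sum_ite_eq' (range m) n]
    by_cases hmn : m = n + 1
    · subst hmn
      rw [if_pos (by simp), if_pos rfl]
      rw [Nat.choose_succ_self_right, Nat.factorial_succ, show n + 1 - n = 1 from by omega]
      push_cast
      ring
    · rw [if_neg (by simp only [Finset.mem_range]; omega), if_neg hmn]

lemma alt_sum_pow {R : Type*} [CommRing R] (k : ℕ) :
    ∑ j ∈ range (k + 1), (-1 : R) ^ j * ((k : R) - 2 * j) ^ k * (k.choose j : R)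
      = 2 ^ k * (k.factorial : R) := by
  have H := fwdDiff_iter_eq_sum_shift (-2 : R) (fun y : R => y ^ k) k (k : R)
  have H2 := fwdDiff_iter_pow (-2 : R) k k le_rfl (k : R)
  rw [if_pos rfl] at H2
  rw [H2] at H
  have key : ∀ j ∈ range (k + 1),
      (-1 : R) ^ k * (((-1 : ℤ) ^ (k - j) * (k.choose j : ℤ)) •
          ((fun y : R => y ^ k) ((k : R) + j • (-2 : R))))
        = (-1 : R) ^ j * ((k : R) - 2 * j) ^ k * (k.choose j : R) := by
    intro j hj
    simp only [Finset.mem_range] at hj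
    have hs : (-1 : R) ^ k * (-1 : R) ^ (k - j) = (-1 : R) ^ j := by
      rw [← pow_add, show k + (k - j) = 2 * (k - j) + j by omega, pow_add, pow_mul,
        neg_one_sq, one_pow, one_mul]
    rw [zsmul_eq_mul]
    push_cast
    rw [show ((k : R) + j • (-2 : R)) = (k : R) - 2 * j by rw [nsmul_eq_mul]; ring]
    rw [← hs]
    ring
  have H3 : (-1 : R) ^ k * ((k.factorial : R) * (-2) ^ k)
      = ∑ j ∈ range (k + 1), (-1 : R) ^ j * ((k : R) - 2 * j) ^ k * (k.choose j : R) := by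
    rw [H, Finset.mul_sum]
    exact Finset.sum_congr rfl key
  rw [← H3]
  have h2 : (-1 : R) ^ k * (-2 : R) ^ k = 2 ^ k := by
    rw [← mul_pow]; norm_num
  calc (-1 : R) ^ k * ((k.factorial : R) * (-2) ^ k)
      = ((-1 : R) ^ k * (-2 : R) ^ k) * (k.factorial : R) := by ring
    _ = 2 ^ k * (k.factorial : R) := by rw [h2]

lemma chooseZ (p n i : ℕ) [Fact p.Prime] :
    ((Nat.choose n i : ℕ) : ZMod p) =
      (Nat.choose (n % p) (i % p) : ZMod p) * (Nat.choose (n / p) (i / p) : ZMod p) := by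
  have h := Choose.choose_modEq_choose_mod_mul_choose_div (p := p) (n := n) (k := i)
  have h2 := (ZMod.intCast_eq_intCast_iff _ _ _).mpr h
  push_cast at h2 ⊢
  exact h2

lemma powZ (p k : ℕ) [Fact p.Prime] (hp3 : 3 ≤ p) (hk : 1 ≤ k) (x : ZMod p) :
    x ^ (3 * p + k - 3) = x ^ k := by
  rw [show 3 * p + k - 3 = 3 * (p - 1) + k by omega]
  by_cases hx : x = 0
  · subst hx
    rw [zero_pow (by omega), zero_pow (by omega)]
  · rw [pow_add, mul_comm 3 (p - 1), pow_mul, ZMod.pow_card_sub_one_eq_one hx, one_pow, one_mul]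

/-- Let `p` be an odd prime and `1 ≤ k < p`, and set `b = 3p + k`.  Then
`T(b) = Σ_{i=0}^{⌊b/2⌋} (-1)^i (b-2i)^(b-3) binom(b,i)` satisfies
`T(b) ≡ -2·Σ_{j=0}^k (-1)^j (k-2j)^k binom(k,j)  (mod p)`;
in particular `p` does not divide `T(3p+k)`. -/
theorem stmt15 (p k : ℕ) (hp : p.Prime) (hodd : Odd p) (hk1 : 1 ≤ k) (hkp : k < p) :
    ((p : ℤ) ∣
      (∑ i ∈ Finset.range ((3 * p + k) / 2 + 1),
          (-1 : ℤ) ^ i * (((3 * p + k : ℕ) : ℤ) - 2 * i) ^ (3 * p + k - 3) *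
            (Nat.choose (3 * p + k) i : ℤ)
        + 2 * ∑ j ∈ Finset.range (k + 1),
            (-1 : ℤ) ^ j * ((k : ℤ) - 2 * j) ^ k * (Nat.choose k j : ℤ))) ∧
    ¬ ((p : ℤ) ∣
      ∑ i ∈ Finset.range ((3 * p + k) / 2 + 1),
        (-1 : ℤ) ^ i * (((3 * p + k : ℕ) : ℤ) - 2 * i) ^ (3 * p + k - 3) *
          (Nat.choose (3 * p + k) i : ℤ)) := by
  haveI : Fact p.Prime := ⟨hp⟩
  have hp2 : 2 ≤ p := hp.two_le
  have hpne2 : p ≠ 2 := by rintro rfl; simp [Nat.odd_iff] at hodd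
  have hp3 : 3 ≤ p := by omega
  set N := (3 * p + k) / 2 + 1 with hNdef
  have hNk : p + k < N := by omega
  have hN2p : N ≤ 2 * p := by omega
  have hmod : (3 * p + k) % p = k := by
    rw [add_comm, Nat.add_mul_mod_self_right, Nat.mod_eq_of_lt hkp]
  have hdiv : (3 * p + k) / p = 3 := by
    rw [add_comm, Nat.add_mul_div_right _ _ (by omega : 0 < p), Nat.div_eq_of_lt hkp]
  set g : ℕ → ZMod p := fun i =>
    (-1 : ZMod p) ^ i * ((k : ZMod p) - 2 * (i : ZMod p)) ^ (3 * p + k - 3)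
      * ((3 * p + k).choose i : ZMod p) with hg
  set t : ℕ → ZMod p := fun j =>
    (-1 : ZMod p) ^ j * ((k : ZMod p) - 2 * (j : ZMod p)) ^ k * (k.choose j : ZMod p) with ht
  set A : ℤ := ∑ i ∈ Finset.range N,
      (-1 : ℤ) ^ i * (((3 * p + k : ℕ) : ℤ) - 2 * i) ^ (3 * p + k - 3) *
        (Nat.choose (3 * p + k) i : ℤ) with hAdef
  set B : ℤ := ∑ j ∈ Finset.range (k + 1),
      (-1 : ℤ) ^ j * ((k : ℤ) - 2 * j) ^ k * (Nat.choose k j : ℤ) with hBdef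
  have castA : ((A : ℤ) : ZMod p) = ∑ i ∈ range N, g i := by
    rw [hAdef, Int.cast_sum]
    refine Finset.sum_congr rfl fun i _ => ?_
    rw [hg]
    push_cast [ZMod.natCast_self]
    ring
  have castB : ((B : ℤ) : ZMod p) = ∑ j ∈ range (k + 1), t j := by
    rw [hBdef, Int.cast_sum]
    refine Finset.sum_congr rfl fun j _ => ?_
    rw [ht]
    push_cast
    ring
  have hvanish : ∀ i ∈ range N,
      i ∉ (range (k + 1) ∪ (range (k + 1)).image (p + ·)) → g i = 0 := by
    intro i hiN hiS
    simp only [Finset.mem_union, Finset.mem_range, Finset.mem_image, not_or, not_exists,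
      not_and] at hiS hiN
    obtain ⟨h1, h2⟩ := hiS
    have hik : k < i := by omega
    have hchoose : ((3 * p + k).choose i : ZMod p) = 0 := by
      have := chooseZ p (3 * p + k) i
      rw [hmod, hdiv] at this
      rcases Nat.lt_or_ge i p with hip | hip
      · rw [this, Nat.mod_eq_of_lt hip, Nat.choose_eq_zero_of_lt hik]
        simp
      · have hi2p : i < 2 * p := by omega
        have him : i % p = i - p := by
          rw [Nat.mod_eq_sub_mod hip, Nat.mod_eq_of_lt (by omega)]
        have h2' := h2 (i - p)
        have hipk : p + k < i := by
          rcases Nat.lt_or_ge (p + k) i with h | h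
          · exact h
          · exfalso; exact h2' (by omega) (by omega)
        rw [this, him, Nat.choose_eq_zero_of_lt (by omega : k < i - p)]
        simp
    rw [hg]
    simp [hchoose]
  have hsubset : (range (k + 1) ∪ (range (k + 1)).image (p + ·)) ⊆ range N := by
    intro i hi
    simp only [Finset.mem_union, Finset.mem_range, Finset.mem_image] at hi ⊢
    rcases hi with h | ⟨x, hx, rfl⟩
    · omega
    · omega
  have hdisj : Disjoint (range (k + 1)) ((range (k + 1)).image (p + ·)) := by
    rw [Finset.disjoint_left]
    intro a ha hb
    simp only [Finset.mem_range, Finset.mem_image] at ha hb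
    obtain ⟨x, hx, rfl⟩ := hb
    omega
  have hsum1 : ∑ i ∈ range N, g i
      = ∑ c ∈ range (k + 1), g c + ∑ c ∈ range (k + 1), g (p + c) := by
    rw [← Finset.sum_subset hsubset hvanish, Finset.sum_union hdisj,
      Finset.sum_image (by intro a _ b _ hab; simp only at hab; omega)]
  have hterm : ∀ c ∈ range (k + 1), g c + g (p + c) = -2 * t c := by
    intro c hc
    simp only [Finset.mem_range] at hc
    have hcp : c < p := by omega
    have e1 : ((3 * p + k).choose c : ZMod p) = (k.choose c : ZMod p) := by
      rw [chooseZ p, hmod, hdiv, Nat.mod_eq_of_lt hcp, Nat.div_eq_of_lt hcp]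
      simp
    have e2 : ((3 * p + k).choose (p + c) : ZMod p) = 3 * (k.choose c : ZMod p) := by
      have hd1 : (p + c) / p = 1 := by
        rw [Nat.add_div_left _ (by omega : 0 < p), Nat.div_eq_of_lt hcp]
      rw [chooseZ p, hmod, hdiv, Nat.add_mod_left, Nat.mod_eq_of_lt hcp, hd1]
      norm_num
      ring
    have e3 : (-1 : ZMod p) ^ (p + c) = -(-1 : ZMod p) ^ c := by
      rw [pow_add, Odd.neg_one_pow hodd]
      ring
    have e4 : ((p + c : ℕ) : ZMod p) = (c : ZMod p) := by
      push_cast [ZMod.natCast_self]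
      ring
    rw [hg, ht]
    simp only [e1, e2, e3, e4, powZ p k hp3 hk1]
    ring
  have hsumT : ∑ j ∈ range (k + 1), t j = 2 ^ k * (k.factorial : ZMod p) := by
    rw [ht]
    exact alt_sum_pow k
  have hA : ((A : ℤ) : ZMod p) = -2 * (2 ^ k * (k.factorial : ZMod p)) := by
    rw [castA, hsum1, ← Finset.sum_add_distrib, Finset.sum_congr rfl hterm,
      ← Finset.mul_sum, hsumT]
  have hB : ((B : ℤ) : ZMod p) = 2 ^ k * (k.factorial : ZMod p) := castB.trans hsumT
  constructor
  · rw [← ZMod.intCast_zmod_eq_zero_iff_dvd _ p]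
    push_cast
    rw [show ((A : ZMod p) + 2 * (B : ZMod p)) = ((A : ℤ) : ZMod p) + 2 * ((B : ℤ) : ZMod p) from rfl]
    rw [hA, hB]
    ring
  · intro hdvd
    have h0 := (ZMod.intCast_zmod_eq_zero_iff_dvd A p).mpr hdvd
    rw [hA] at h0
    have h2ne : (2 : ZMod p) ≠ 0 := by
      have : ((2 : ℕ) : ZMod p) ≠ 0 := by
        rw [Ne, ZMod.natCast_eq_zero_iff]
        intro hd
        have := Nat.le_of_dvd (by norm_num) hd
        omega
      simpa using this
    have hfne : ((k.factorial : ℕ) : ZMod p) ≠ 0 := by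
      rw [Ne, ZMod.natCast_eq_zero_iff]
      intro hd
      have := (Nat.Prime.dvd_factorial hp).mp hd
      omega
    exact mul_ne_zero (neg_ne_zero.mpr h2ne)
      (mul_ne_zero (pow_ne_zero _ h2ne) hfne) h0
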